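/- Let N ≥ 1 be an integer and let t be a nonzero real number. Then the function ℝ → ℝ defined by z ↦ ((z + t)^(2^N) − z^(2^N)) / t is strictly increasing. -/

import Mathlib

/-- For `N ≥ 1` and `t ≠ 0`, the function `z ↦ ((z + t)^(2^N) − z^(2^N)) / t`
is strictly increasing on `ℝ`. -/
theorem strictMono_diff_quotient (N : ℕ) (hN : 1 ≤ N) (t : ℝ) (ht : t ≠ 0) :
    StrictMono (fun z : ℝ => ((z + t) ^ (2 ^ N) - z ^ (2 ^ N)) / t) := by
  have hm : Odd (2 ^ N - 1) := by
    have he : Even (2 ^ N) := (Nat.even_pow).2 ⟨even_two, by omega⟩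
    exact Nat.Even.sub_odd Nat.one_le_two_pow he odd_one
  apply strictMono_of_deriv_pos
  intro z
  have h1 : HasDerivAt (fun z : ℝ => (z + t) ^ (2 ^ N))
      ((2 ^ N : ℕ) * (z + t) ^ (2 ^ N - 1)) z := by
    simpa using ((hasDerivAt_id z).add_const t).fun_pow (2 ^ N)
  have hd : HasDerivAt (fun z : ℝ => ((z + t) ^ (2 ^ N) - z ^ (2 ^ N)) / t)
      (((2 ^ N : ℕ) * (z + t) ^ (2 ^ N - 1) - (2 ^ N : ℕ) * z ^ (2 ^ N - 1)) / t) z :=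
    (h1.sub (hasDerivAt_pow (2 ^ N) z)).div_const t
  rw [hd.deriv]
  have hratio : ((z + t) ^ (2 ^ N - 1) - z ^ (2 ^ N - 1)) / t > 0 := by
    rcases ht.lt_or_gt with h | h
    · have : (z + t) ^ (2 ^ N - 1) < z ^ (2 ^ N - 1) := hm.strictMono_pow (by linarith)
      exact div_pos_of_neg_of_neg (by linarith) h
    · have : z ^ (2 ^ N - 1) < (z + t) ^ (2 ^ N - 1) := hm.strictMono_pow (by linarith)
      exact div_pos (by linarith) h
  have h2 : (0 : ℝ) < (2 ^ N : ℕ) := by positivity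
  calc (0:ℝ) < (2 ^ N : ℕ) * (((z + t) ^ (2 ^ N - 1) - z ^ (2 ^ N - 1)) / t) :=
        mul_pos h2 hratio
    _ = ((2 ^ N : ℕ) * (z + t) ^ (2 ^ N - 1) - (2 ^ N : ℕ) * z ^ (2 ^ N - 1)) / t := by
        ring
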